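/- Let g be an odd integer with g ∉ {-1, 1} and let w be a non-zero integer. Then for every integer n with n ≥ d(w) + max{3, c(g)}, the exponential sum ∑_{k=1}^{ω_g(2^n)} e^{2πi·w·g^k / 2^n} equals 0. -/

import Mathlib

open Complex

/-- The multiplicative order of `g` modulo `2^n`: the least positive integer `k`
such that `g ^ k ≡ 1 (mod 2^n)`. -/
noncomputable def multOrd (g : ℤ) (n : ℕ) : ℕ :=
  sInf {k : ℕ | 0 < k ∧ g ^ k ≡ 1 [ZMOD (2 ^ n : ℤ)]}

/-- `d w` is the greatest exponent `k` such that `2^k ∣ w` (the 2-adic valuation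
of the nonzero integer `w`). -/
noncomputable def dval (w : ℤ) : ℕ := padicValInt 2 w

/-- For an odd integer `g ∉ {-1, 1}`, `cval g` is the least positive integer `k`
with `g < 2^(k-1) - 1` when `g > 1`, and the least positive integer `k` with
`g > -2^(k-1) - 1` when `g < -1`. -/
noncomputable def cval (g : ℤ) : ℕ :=
  if 1 < g then sInf {k : ℕ | 0 < k ∧ g < 2 ^ (k - 1) - 1}
  else sInf {k : ℕ | 0 < k ∧ -2 ^ (k - 1) - 1 < g}

private lemma coprime_two_pow (x : ℤ) (hx : Odd x) (k : ℕ) : IsCoprime ((2:ℤ)^k) x := by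
  obtain ⟨t, rfl⟩ := hx
  exact IsCoprime.pow_left ⟨-t, 1, by ring⟩

private lemma g_sq (g : ℤ) (hg : Odd g) (hg1 : g ≠ 1) (hgm1 : g ≠ -1) :
    ∃ (s : ℕ) (u : ℤ), 3 ≤ s ∧ Odd u ∧ g ^ 2 = 1 + 2 ^ s * u := by
  have hg0 : g ≠ 0 := by rintro rfl; simp [Int.odd_iff] at hg
  have hgg : 2 ≤ g ∨ g ≤ -2 := by omega
  have hNpos : 0 < g ^ 2 - 1 := by rcases hgg with h | h <;> nlinarith
  have hNc : (((g ^ 2 - 1).toNat : ℤ)) = g ^ 2 - 1 := Int.toNat_of_nonneg (le_of_lt hNpos)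
  have hN0 : (g ^ 2 - 1).toNat ≠ 0 := by omega
  obtain ⟨s, u, hu, hNe⟩ := Nat.exists_eq_pow_mul_and_not_dvd hN0 2 (by norm_num)
  obtain ⟨c, hc⟩ := hg
  obtain ⟨e, he⟩ := Int.even_mul_succ_self c
  have h8 : (8:ℤ) ∣ ((g ^ 2 - 1).toNat : ℤ) := ⟨e, by rw [hNc, hc]; linear_combination 4 * he⟩
  have h8N : 8 ∣ (g ^ 2 - 1).toNat := by exact_mod_cast h8
  rw [hNe] at h8N
  have hs3 : 3 ≤ s := by
    by_contra h
    interval_cases s <;> simp at h8N <;> omega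
  refine ⟨s, (u : ℤ), hs3, ?_, ?_⟩
  · rw [Int.odd_iff]; omega
  · have h1 : ((g ^ 2 - 1).toNat : ℤ) = 2 ^ s * (u : ℤ) := by rw [hNe]; push_cast; ring
    rw [hNc] at h1; linarith

private lemma pow_two_pow (a : ℤ) (s : ℕ) (hs : 2 ≤ s) (u : ℤ) (hu : Odd u)
    (ha : a = 1 + 2 ^ s * u) (i : ℕ) :
    ∃ v : ℤ, Odd v ∧ a ^ (2 ^ i : ℕ) = 1 + 2 ^ (s + i) * v := by
  induction i with
  | zero => exact ⟨u, hu, by simpa using ha⟩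
  | succ i ih =>
    obtain ⟨v, hv, hvi⟩ := ih
    obtain ⟨r, hr⟩ : ∃ r, s + i = r + 2 := ⟨s + i - 2, by omega⟩
    rw [hr] at hvi
    refine ⟨v + 2 ^ (r + 1) * v ^ 2, ?_, ?_⟩
    · obtain ⟨t, ht⟩ := hv
      exact ⟨t + 2 ^ r * v ^ 2, by rw [ht]; ring⟩
    · have h1 : a ^ (2 ^ (i + 1) : ℕ) = (a ^ (2 ^ i : ℕ)) ^ 2 := by
        rw [← pow_mul, Nat.pow_succ]
      rw [h1, hvi, show s + (i + 1) = (r + 2) + 1 by omega]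
      ring

private lemma cval_bound_pos (g : ℤ) (h1 : 1 < g) (n : ℕ) (hn : cval g ≤ n) :
    g < 2 ^ (n - 1) - 1 := by
  have hS : {k : ℕ | 0 < k ∧ g < 2 ^ (k - 1) - 1}.Nonempty := by
    refine ⟨g.toNat + 2, by norm_num, ?_⟩
    show g < 2 ^ (g.toNat + 1) - 1
    have h2 : (g.toNat : ℤ) = g := Int.toNat_of_nonneg (by omega)
    have h3 : (g.toNat : ℤ) < 2 ^ g.toNat := by exact_mod_cast Nat.lt_two_pow_self
    have h5 : (1:ℤ) ≤ 2 ^ g.toNat := one_le_pow₀ (by norm_num)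
    rw [pow_succ]; linarith
  have hmem := Nat.sInf_mem hS
  simp only [cval, if_pos h1] at hn
  obtain ⟨hpos, hlt⟩ := hmem
  have hmono : (2:ℤ) ^ (sInf {k : ℕ | 0 < k ∧ g < 2 ^ (k - 1) - 1} - 1) ≤ 2 ^ (n - 1) :=
    pow_le_pow_right₀ (by norm_num) (by omega)
  linarith

private lemma cval_bound_neg (g : ℤ) (h1 : g < -1) (n : ℕ) (hn : cval g ≤ n) :
    -2 ^ (n - 1) - 1 < g := by
  have hS : {k : ℕ | 0 < k ∧ -2 ^ (k - 1) - 1 < g}.Nonempty := by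
    refine ⟨(-g).toNat + 2, by norm_num, ?_⟩
    show -2 ^ ((-g).toNat + 1) - 1 < g
    have h2 : ((-g).toNat : ℤ) = -g := Int.toNat_of_nonneg (by omega)
    have h3 : ((-g).toNat : ℤ) < 2 ^ (-g).toNat := by exact_mod_cast Nat.lt_two_pow_self
    have h5 : (0:ℤ) < 2 ^ (-g).toNat := by positivity
    rw [pow_succ]; linarith
  have hmem := Nat.sInf_mem hS
  simp only [cval, if_neg (by omega : ¬ 1 < g)] at hn
  obtain ⟨hpos, hlt⟩ := hmem
  have hmono : (2:ℤ) ^ (sInf {k : ℕ | 0 < k ∧ -2 ^ (k - 1) - 1 < g} - 1) ≤ 2 ^ (n - 1) :=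
    pow_le_pow_right₀ (by norm_num) (by omega)
  linarith

/-- Key lemma: for suitable `n`, the subgroup generated by `g` mod `2^n`
contains `1 + 2^(n-1)`. -/
private lemma lemA (g : ℤ) (hg : Odd g) (hg1 : g ≠ 1) (hgm1 : g ≠ -1)
    (n : ℕ) (h3 : 3 ≤ n) (hc : cval g ≤ n) :
    ∃ j : ℕ, 0 < j ∧ (2:ℤ) ^ n ∣ g ^ j - (1 + 2 ^ (n - 1)) := by
  have hg0 : g ≠ 0 := by rintro rfl; simp [Int.odd_iff] at hg
  obtain ⟨s, u, hs3, hu, hgs⟩ := g_sq g hg hg1 hgm1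
  obtain ⟨t, rfl⟩ : ∃ t, n = t + 3 := ⟨n - 3, by omega⟩
  have hsub : t + 3 - 1 = t + 2 := rfl
  rw [hsub]
  rcases Nat.lt_or_ge s (t + 3) with hlt | hge
  · -- main case: s < n, use j = 2^(n-s)
    obtain ⟨v, hv, hvi⟩ := pow_two_pow (g ^ 2) s (by omega) u hu hgs (t + 2 - s)
    rw [show s + (t + 2 - s) = t + 2 by omega] at hvi
    refine ⟨2 ^ (t + 3 - s), by positivity, ?_⟩
    have hgj : g ^ (2 ^ (t + 3 - s) : ℕ) = (g ^ 2) ^ (2 ^ (t + 2 - s) : ℕ) := by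
      rw [← pow_mul]
      congr 1
      rw [show t + 3 - s = (t + 2 - s) + 1 by omega, Nat.pow_succ]
      ring
    rw [hgj, hvi]
    obtain ⟨r, rfl⟩ := hv
    exact ⟨r, by ring⟩
  · -- boundary case: 2^n ∣ g^2 - 1
    have hdvd : (2:ℤ) ^ (t + 3) ∣ g ^ 2 - 1 := by
      have h1 : (2:ℤ) ^ (t + 3) ∣ 2 ^ s := pow_dvd_pow 2 hge
      have h2 : g ^ 2 - 1 = 2 ^ s * u := by rw [hgs]; ring
      rw [h2]; exact h1.mul_right u
    obtain ⟨c, hc'⟩ := hg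
    have h4 : (2:ℤ) ^ (t + 3) ∣ 4 * (c * (c + 1)) := by
      have : g ^ 2 - 1 = 4 * (c * (c + 1)) := by rw [hc']; ring
      rwa [this] at hdvd
    have hcc : (2:ℤ) ^ (t + 1) ∣ c * (c + 1) := by
      have h44 : (2:ℤ) ^ (t + 3) = 4 * 2 ^ (t + 1) := by ring
      rw [h44] at h4
      exact (mul_dvd_mul_iff_left (by norm_num : (4:ℤ) ≠ 0)).mp h4
    have hsign : 1 < g ∨ g < -1 := by omega
    have h2pos : (0:ℤ) < 2 ^ (t + 2) := by positivity
    have h2four : (4:ℤ) ≤ 2 ^ (t + 2) := by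
      calc (4:ℤ) = 2 ^ 2 := by norm_num
      _ ≤ 2 ^ (t + 2) := pow_le_pow_right₀ (by norm_num) (by omega)
    rcases Int.even_or_odd c with hce | hco
    · -- c even: 2^(t+2) ∣ g - 1
      have hc1 : (2:ℤ) ^ (t + 1) ∣ c :=
        (coprime_two_pow (c + 1) (Even.add_one hce) (t + 1)).dvd_of_dvd_mul_right hcc
      obtain ⟨x, hx⟩ := hc1
      have hgx : g - 1 = 2 ^ (t + 2) * x := by rw [hc', hx]; ring
      rcases hsign with hpos | hneg
      · exfalso
        have hb := cval_bound_pos g hpos (t + 3) hc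
        rw [hsub] at hb
        have hx1 : 1 ≤ x := by nlinarith
        nlinarith
      · have hb := cval_bound_neg g hneg (t + 3) hc
        rw [hsub] at hb
        have hx1 : x = -1 := by nlinarith
        refine ⟨1, one_pos, ⟨-1, ?_⟩⟩
        rw [pow_one]
        have : g = 1 - 2 ^ (t + 2) := by rw [hx1] at hgx; linarith
        rw [this]; ring
    · -- c odd: 2^(t+2) ∣ g + 1, contradiction
      exfalso
      have hc1 : (2:ℤ) ^ (t + 1) ∣ c + 1 :=
        (coprime_two_pow c hco (t + 1)).dvd_of_dvd_mul_left hcc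
      obtain ⟨x, hx⟩ := hc1
      have hgx : g + 1 = 2 ^ (t + 2) * x := by rw [hc']; linear_combination 2 * hx
      rcases hsign with hpos | hneg
      · have hb := cval_bound_pos g hpos (t + 3) hc
        rw [hsub] at hb
        have hx1 : 1 ≤ x := by nlinarith
        nlinarith
      · have hb := cval_bound_neg g hneg (t + 3) hc
        rw [hsub] at hb
        have hx0 : x ≤ -1 := by nlinarith
        nlinarith

private lemma exp_cong (M : ℕ) (A B : ℤ) (h : (2:ℤ) ^ M ∣ B - A) :
    Complex.exp (2 * Real.pi * Complex.I * ((B : ℤ) : ℂ) / (2:ℂ) ^ M)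
      = Complex.exp (2 * Real.pi * Complex.I * ((A : ℤ) : ℂ) / (2:ℂ) ^ M) := by
  obtain ⟨c, hc⟩ := h
  have hB : B = A + 2 ^ M * c := by linarith
  subst hB
  have h2 : ((2:ℂ) ^ M) ≠ 0 := pow_ne_zero _ two_ne_zero
  have key : 2 * (Real.pi : ℂ) * Complex.I * ((A + 2 ^ M * c : ℤ) : ℂ) / (2:ℂ) ^ M
      = 2 * (Real.pi : ℂ) * Complex.I * ((A : ℤ) : ℂ) / (2:ℂ) ^ M
        + (c : ℂ) * (2 * (Real.pi : ℂ) * Complex.I) := by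
    push_cast
    field_simp
  rw [key, Complex.exp_add, Complex.exp_int_mul_two_pi_mul_I, mul_one]

private lemma exp_neg' (M : ℕ) (A O : ℤ) (hO : Odd O) :
    Complex.exp (2 * Real.pi * Complex.I * ((A + 2 ^ M * O : ℤ) : ℂ) / (2:ℂ) ^ (M + 1))
      = - Complex.exp (2 * Real.pi * Complex.I * ((A : ℤ) : ℂ) / (2:ℂ) ^ (M + 1)) := by
  obtain ⟨r, rfl⟩ := hO
  have h2 : ((2:ℂ) ^ (M + 1)) ≠ 0 := pow_ne_zero _ two_ne_zero
  have key : 2 * (Real.pi : ℂ) * Complex.I * ((A + 2 ^ M * (2 * r + 1) : ℤ) : ℂ) / (2:ℂ) ^ (M + 1)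
      = 2 * (Real.pi : ℂ) * Complex.I * ((A : ℤ) : ℂ) / (2:ℂ) ^ (M + 1)
        + ((r : ℂ) * (2 * (Real.pi : ℂ) * Complex.I) + (Real.pi : ℂ) * Complex.I) := by
    push_cast
    rw [pow_succ]
    field_simp
  rw [key, Complex.exp_add, Complex.exp_add, Complex.exp_int_mul_two_pi_mul_I,
    Complex.exp_pi_mul_I]
  ring

private lemma sum_shift (m : ℕ) (f : ℕ → ℂ) (hf : ∀ k, f (k + m) = f k) (j : ℕ) :
    ∑ k ∈ Finset.range m, f (k + j) = ∑ k ∈ Finset.range m, f k := by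
  induction j with
  | zero => simp
  | succ j ih =>
    have h1 : ∑ k ∈ Finset.range (m + 1), f (k + j)
        = ∑ k ∈ Finset.range m, f (k + (j + 1)) + f j := by
      rw [Finset.sum_range_succ' (fun k => f (k + j)) m]
      simp only [zero_add]
      congr 1
      apply Finset.sum_congr rfl
      intro k _
      congr 1
      omega
    have h2 : ∑ k ∈ Finset.range (m + 1), f (k + j)
        = ∑ k ∈ Finset.range m, f (k + j) + f (m + j) := Finset.sum_range_succ _ m
    have h3 : f (m + j) = f j := by rw [show m + j = j + m by omega, hf]
    rw [h3] at h2
    have := h1.symm.trans h2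
    have h4 : ∑ k ∈ Finset.range m, f (k + (j + 1)) = ∑ k ∈ Finset.range m, f (k + j) := by
      linear_combination this
    rw [h4, ih]

theorem exp_sum_eq_zero (g : ℤ) (hg : Odd g) (hg1 : g ≠ 1) (hgm1 : g ≠ -1)
    (w : ℤ) (hw : w ≠ 0) (n : ℕ) (hn : dval w + max 3 (cval g) ≤ n) :
    ∑ k ∈ Finset.Icc 1 (multOrd g n),
      Complex.exp (2 * Real.pi * Complex.I * (w : ℂ) * (g : ℂ) ^ k / (2 : ℂ) ^ n) = 0 := by
  haveI : Fact (Nat.Prime 2) := ⟨Nat.prime_two⟩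
  -- decompose w = 2^d * w'
  obtain ⟨w', hww'⟩ : ((2:ℤ)) ^ dval w ∣ w := by
    have := padicValInt_dvd (p := 2) w
    simpa [dval] using this
  have hw'odd : Odd w' := by
    rw [← Int.not_even_iff_odd]
    intro hev
    obtain ⟨t, ht⟩ := hev
    have hdd : ((2:ℤ)) ^ (dval w + 1) ∣ w := ⟨t, hww'.trans (by rw [ht]; ring)⟩
    have := (padicValInt_dvd_iff (p := 2) (dval w + 1) w).mp (by exact_mod_cast hdd)
    rcases this with h | h
    · exact hw h
    · simp only [dval] at *; omega
  obtain ⟨n', hnn', hn'3, hn'c⟩ : ∃ n', n = dval w + n' ∧ 3 ≤ n' ∧ cval g ≤ n' :=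
    ⟨n - dval w, by omega, by omega, by omega⟩
  subst hnn'
  set d := dval w with hd
  obtain ⟨n'', rfl⟩ : ∃ n'', n' = n'' + 3 := ⟨n' - 3, by omega⟩
  set N := d + (n'' + 3) with hN
  -- key element of ⟨g⟩
  obtain ⟨j, hj0, hjdvd⟩ := lemA g hg hg1 hgm1 (n'' + 3) (by omega) hn'c
  rw [show n'' + 3 - 1 = n'' + 2 from rfl] at hjdvd
  obtain ⟨cj, hcj⟩ := hjdvd
  -- order facts
  have hne : {k : ℕ | 0 < k ∧ g ^ k ≡ 1 [ZMOD (2 ^ N : ℤ)]}.Nonempty := by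
    obtain ⟨s, u, hs3, hu, hgs⟩ := g_sq g hg hg1 hgm1
    obtain ⟨v, hv, hvi⟩ := pow_two_pow (g ^ 2) s (by omega) u hu hgs N
    refine ⟨2 ^ (N + 1), by positivity, ?_⟩
    have h1 : g ^ (2 ^ (N + 1) : ℕ) = (g ^ 2) ^ (2 ^ N : ℕ) := by
      rw [← pow_mul]
      congr 1
      rw [Nat.pow_succ]
      ring
    have hdvd : (2:ℤ) ^ N ∣ (1 - g ^ (2 ^ (N + 1) : ℕ)) := by
      have h2 : (1:ℤ) - g ^ (2 ^ (N + 1) : ℕ) = 2 ^ (s + N) * (-v) := by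
        rw [h1, hvi]; ring
      rw [h2]
      exact dvd_mul_of_dvd_left (pow_dvd_pow 2 (by omega)) _
    exact Int.modEq_iff_dvd.mpr hdvd
  have hmm : 0 < multOrd g N ∧ g ^ multOrd g N ≡ 1 [ZMOD (2 ^ N : ℤ)] := Nat.sInf_mem hne
  set m := multOrd g N with hm
  obtain ⟨hm0, hm1⟩ := hmm
  have hgm : (2:ℤ) ^ N ∣ g ^ m - 1 := by
    have h1 := hm1.dvd
    exact dvd_sub_comm.mp h1
  -- the summand
  set f : ℕ → ℂ := fun k =>
    Complex.exp (2 * Real.pi * Complex.I * ((w * g ^ k : ℤ) : ℂ) / (2:ℂ) ^ N) with hf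
  have hsummand : ∀ k, Complex.exp (2 * Real.pi * Complex.I * (w : ℂ) * (g : ℂ) ^ k / (2:ℂ) ^ N)
      = f k := by
    intro k
    simp only [hf]
    congr 1
    push_cast
    ring
  -- periodicity
  have hper : ∀ k, f (k + m) = f k := by
    intro k
    simp only [hf]
    apply exp_cong
    have h1 : w * g ^ (k + m) - w * g ^ k = (w * g ^ k) * (g ^ m - 1) := by
      rw [pow_add]; ring
    rw [h1]
    exact hgm.mul_left _
  -- negation
  have hneg : ∀ k, f (k + j) = - f k := by
    intro k
    have hO : Odd (w' * g ^ k * (1 + 2 * cj)) :=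
      (hw'odd.mul (hg.pow)).mul ⟨cj, by ring⟩
    have hnum : w * g ^ (k + j) = w * g ^ k + 2 ^ (d + n'' + 2) * (w' * g ^ k * (1 + 2 * cj)) := by
      have hgj : g ^ j = 1 + 2 ^ (n'' + 2) + 2 ^ (n'' + 3) * cj := by linarith [hcj]
      rw [pow_add, hgj, hww']
      rw [show d + n'' + 2 = d + (n'' + 2) from by omega, pow_add,
        show n'' + 3 = (n'' + 2) + 1 from rfl, pow_succ]
      ring
    have hN1 : N = (d + n'' + 2) + 1 := by omega
    simp only [hf, hnum, hN1]
    exact exp_neg' (d + n'' + 2) (w * g ^ k) _ hO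
  -- assemble
  have hIcc : ∑ k ∈ Finset.Icc 1 m, f k = ∑ k ∈ Finset.range m, f (1 + k) := by
    rw [← Finset.Ico_add_one_right_eq_Icc, Finset.sum_Ico_eq_sum_range]
    simp
  have hFper : ∀ k, f (1 + (k + m)) = f (1 + k) := by
    intro k
    rw [show 1 + (k + m) = (1 + k) + m by omega, hper]
  have hshift := sum_shift m (fun i => f (1 + i)) hFper j
  have hFneg : ∀ k, f (1 + (k + j)) = - f (1 + k) := by
    intro k
    rw [show 1 + (k + j) = (1 + k) + j by omega, hneg]
  have hSneg : ∑ k ∈ Finset.range m, f (1 + (k + j))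
      = - ∑ k ∈ Finset.range m, f (1 + k) := by
    rw [← Finset.sum_neg_distrib]
    exact Finset.sum_congr rfl fun k _ => hFneg k
  have hS : ∑ k ∈ Finset.range m, f (1 + k) = 0 := by
    have h1 : ∑ k ∈ Finset.range m, f (1 + k) = - ∑ k ∈ Finset.range m, f (1 + k) :=
      hshift.symm.trans hSneg
    linear_combination h1 / 2
  calc ∑ k ∈ Finset.Icc 1 m,
      Complex.exp (2 * Real.pi * Complex.I * (w : ℂ) * (g : ℂ) ^ k / (2:ℂ) ^ N)
      = ∑ k ∈ Finset.Icc 1 m, f k := Finset.sum_congr rfl fun k _ => hsummand k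
    _ = ∑ k ∈ Finset.range m, f (1 + k) := hIcc
    _ = 0 := hS
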